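/- Let F be a strategyproof 2-facility mechanism on the line with approximation ratio at most ρ for 3 agents, let (i, a) have left-threshold p and preferred agent j (in the sense of Lemma i-separated). Then for any 3-agent instance x with a = x_i < min(x_j, x_k) and x_j ≥ p, F places a facility at x_j. -/
import Mathlib


noncomputable section

/-- Cost of an agent at location `a` under a pair of facilities. -/
def fcost (a : ℝ) (y : ℝ × ℝ) : ℝ := min |a - y.1| |a - y.2|

/-- Social cost: sum of the agents' distances to their nearest facility. -/
def scost {n : ℕ} (x : Fin n → ℝ) (y : ℝ × ℝ) : ℝ := ∑ i, fcost (x i) y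

/-- Optimal social cost over all placements of two facilities. -/
def optCost {n : ℕ} (x : Fin n → ℝ) : ℝ := ⨅ y : ℝ × ℝ, scost x y

/-- The mechanism outputs its facilities in increasing order. -/
def Ordered {n : ℕ} (F : (Fin n → ℝ) → ℝ × ℝ) : Prop := ∀ x, (F x).1 ≤ (F x).2

/-- No agent can strictly decrease her cost by misreporting her location. -/
def Strategyproof {n : ℕ} (F : (Fin n → ℝ) → ℝ × ℝ) : Prop :=
  ∀ (x : Fin n → ℝ) (i : Fin n) (y : ℝ),
    fcost (x i) (F x) ≤ fcost (x i) (F (Function.update x i y))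

/-- `F` has approximation ratio (at most) `ρ` for the social cost. -/
def ApproxRatio {n : ℕ} (F : (Fin n → ℝ) → ℝ × ℝ) (ρ : ℝ) : Prop :=
  ∀ x, scost x (F x) ≤ ρ * optCost x

/-- An `(i|j,k)`-well-separated 3-agent instance. -/
def WellSep (ρ : ℝ) (x : Fin 3 → ℝ) (i j k : Fin 3) : Prop :=
  x i < x j ∧ x j < x k ∧ ρ * (x k - x j) < x j - x i

/-- An `i`-left-well-separated 3-agent instance: agent `i` is isolated on the
left of the two nearby agents `j` and `k`. -/
def LeftWS (ρ : ℝ) (x : Fin 3 → ℝ) (i j k : Fin 3) : Prop :=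
  x i < min (x j) (x k) ∧
    ρ * (max (x j) (x k) - min (x j) (x k)) < min (x j) (x k) - x i

/-- The median of three reals. -/
def med3 (a b c : ℝ) : ℝ := max (min a b) (min (max a b) c)

/-! ### Auxiliary material for the proof of `non_separated` -/

/-- Profile with agent `j` at `t`, agent `k` at `w`, others as in `x`. -/
def prof (x : Fin 3 → ℝ) (j k : Fin 3) (t w : ℝ) : Fin 3 → ℝ :=
  Function.update (Function.update x k w) j t

lemma prof_apply_j (x : Fin 3 → ℝ) (j k : Fin 3) (t w : ℝ) : prof x j k t w j = t := by
  unfold prof; rw [Function.update_self]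

lemma prof_apply_k (x : Fin 3 → ℝ) {j k : Fin 3} (hjk : j ≠ k) (t w : ℝ) :
    prof x j k t w k = w := by
  unfold prof; rw [Function.update_of_ne (Ne.symm hjk), Function.update_self]

lemma prof_apply_i (x : Fin 3 → ℝ) {i j k : Fin 3} (hij : i ≠ j) (hik : i ≠ k) (t w : ℝ) :
    prof x j k t w i = x i := by
  unfold prof; rw [Function.update_of_ne hij, Function.update_of_ne hik]

lemma prof_update_j (x : Fin 3 → ℝ) (j k : Fin 3) (t w t' : ℝ) :
    Function.update (prof x j k t w) j t' = prof x j k t' w := by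
  unfold prof; rw [Function.update_idem]

lemma prof_update_k (x : Fin 3 → ℝ) {j k : Fin 3} (hjk : j ≠ k) (t w w' : ℝ) :
    Function.update (prof x j k t w) k w' = prof x j k t w' := by
  unfold prof; rw [Function.update_comm hjk, Function.update_idem]

lemma prof_self (x : Fin 3 → ℝ) (j k : Fin 3) : prof x j k (x j) (x k) = x := by
  unfold prof; rw [Function.update_eq_self, Function.update_eq_self]

lemma NSfcost_nonneg (a : ℝ) (y : ℝ × ℝ) : 0 ≤ fcost a y :=
  le_min (abs_nonneg _) (abs_nonneg _)

lemma NSscost_nonneg {n : ℕ} (x : Fin n → ℝ) (y : ℝ × ℝ) : 0 ≤ scost x y :=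
  Finset.sum_nonneg fun _ _ => NSfcost_nonneg _ _

lemma NSoptCost_le {n : ℕ} (x : Fin n → ℝ) (y : ℝ × ℝ) : optCost x ≤ scost x y :=
  ciInf_le ⟨0, by rintro z ⟨y', rfl⟩; exact NSscost_nonneg x y'⟩ y

lemma NSfcost_le {t f : ℝ} {Y : ℝ × ℝ} (h : Y.1 = f ∨ Y.2 = f) : fcost t Y ≤ |t - f| := by
  rcases h with h | h
  · rw [← h]; exact min_le_left _ _
  · rw [← h]; exact min_le_right _ _

lemma NSsum3 (i j k : Fin 3) (hij : i ≠ j) (hik : i ≠ k) (hjk : j ≠ k) (g : Fin 3 → ℝ) :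
    ∑ m, g m = g i + g j + g k := by
  have h1 : ({i, j, k} : Finset (Fin 3)).card = 3 := by
    rw [Finset.card_insert_of_notMem (by simp [hij, hik]),
      Finset.card_insert_of_notMem (by simp [hjk]), Finset.card_singleton]
  have h2 : ({i, j, k} : Finset (Fin 3)) = Finset.univ :=
    Finset.eq_univ_of_card _ (by simp [h1])
  rw [← h2, Finset.sum_insert (by simp [hij, hik]), Finset.sum_insert (by simp [hjk]),
    Finset.sum_singleton]
  ring

set_option maxHeartbeats 2000000

/-- Lemma `non-separated`: if `(i, a)` has left-preferred agent `j` and finite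
left-threshold `p` (in the sense of Lemma `i-separated`), then for any 3-agent
instance `x` with `a = x_i < min(x_j, x_k)` and `x_j ≥ p`, `F` places a
facility at `x_j`. -/
theorem non_separated (F : (Fin 3 → ℝ) → ℝ × ℝ) (ρ : ℝ) (hρ : 1 ≤ ρ)
    (hord : Ordered F) (hsp : Strategyproof F) (happ : ApproxRatio F ρ)
    (i j k : Fin 3) (hij : i ≠ j) (hik : i ≠ k) (hjk : j ≠ k)
    (a p : ℝ) (hpa : a ≤ p)
    (hsep : ∀ y : Fin 3 → ℝ, y i = a → LeftWS ρ y i j k →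
      (p ≤ y j → (F y).2 = y j) ∧ (y j < p → (F y).2 = med3 p (y j) (y k)))
    (x : Fin 3 → ℝ) (hxa : x i = a) (hxj : x i < x j) (hxk : x i < x k)
    (hjp : p ≤ x j) :
    (F x).1 = x j ∨ (F x).2 = x j := by
  have hρ0 : (0:ℝ) < ρ := lt_of_lt_of_le one_pos hρ
  have h2ρ : (0:ℝ) < ρ + 2 := by linarith
  have hab : a < x j := hxa ▸ hxj
  have hac : a < x k := hxa ▸ hxk
  -- basic profile facts
  have hYi : ∀ t w : ℝ, prof x j k t w i = a := fun t w => by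
    rw [prof_apply_i x hij hik]; exact hxa
  -- SP along j-deviations
  have hSPj : ∀ t t' : ℝ,
      fcost t (F (prof x j k t (x k))) ≤ fcost t (F (prof x j k t' (x k))) := by
    intro t t'
    have h := hsp (prof x j k t (x k)) j t'
    rwa [prof_apply_j, prof_update_j] at h
  -- SP along k-deviations
  have hSPk : ∀ t w w' : ℝ,
      fcost w (F (prof x j k t w)) ≤ fcost w (F (prof x j k t w')) := by
    intro t w w'
    have h := hsp (prof x j k t w) k w'
    rwa [prof_apply_k x hjk, prof_update_k x hjk] at h
  -- the well-separated structure from `hsep`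
  have hWS : ∀ t w : ℝ, a < min t w → ρ * (max t w - min t w) < min t w - a → p ≤ t →
      (F (prof x j k t w)).2 = t := by
    intro t w h1 h2 hpt
    have hy : LeftWS ρ (prof x j k t w) i j k := by
      unfold LeftWS
      rw [hYi, prof_apply_j, prof_apply_k x hjk]
      exact ⟨h1, h2⟩
    have h3 := (hsep _ (hYi t w) hy).1 (by rw [prof_apply_j]; exact hpt)
    rwa [prof_apply_j] at h3
  -- scost decomposition
  have hsc : ∀ (y : Fin 3 → ℝ) (Y : ℝ × ℝ),
      scost y Y = fcost (y i) Y + fcost (y j) Y + fcost (y k) Y := by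
    intro y Y
    exact NSsum3 i j k hij hik hjk _
  -- Exclusion lemma: facilities of `F (prof x j k t (x k))` (for `t ≥ p`, `t > a`)
  -- which are not at `t` are at distance at least `2(t-a)/(ρ+2)` from `t`.
  have hEXCL : ∀ t f : ℝ, a < t → p ≤ t →
      ((F (prof x j k t (x k))).1 = f ∨ (F (prof x j k t (x k))).2 = f) →
      f ≠ t → 2*(t - a)/(ρ+2) ≤ |t - f| := by
    intro t f hat hpt hfac hft
    by_contra hlt
    push_neg at hlt
    have hβ : |t - f| * (ρ+2) < 2*(t-a) := by
      have := (lt_div_iff₀ h2ρ).mp hlt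
      linarith
    rcases hft.lt_or_gt with hftl | hftr
    · -- f < t : left exclusion, uses the approximation ratio to locate F₁
      have hf1' : (t - f)*(ρ+2) < 2*(t-a) := by
        have h1 : t - f ≤ |t - f| := le_abs_self _
        nlinarith
      have hl₁f : ((1+ρ)*t + a)/(ρ+2) < (t+f)/2 := by
        rw [div_lt_div_iff₀ h2ρ two_pos]; nlinarith
      obtain ⟨w, hwl, hwr⟩ := exists_between hl₁f
      have hw1' : (1+ρ)*t + a < w*(ρ+2) := by
        have := (div_lt_iff₀ h2ρ).mp hwl
        nlinarith
      have hwt : w < t := by linarith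
      have hwa : a < w := by
        nlinarith [mul_pos (show (0:ℝ) < 1+ρ by linarith) (show (0:ℝ) < t - a by linarith)]
      have hws : ρ*(t - w) < w - a := by nlinarith
      have hf2y : (F (prof x j k t w)).2 = t := by
        apply hWS t w
        · rw [min_eq_right hwt.le]; exact hwa
        · rw [min_eq_right hwt.le, max_eq_left hwt.le]; exact hws
        · exact hpt
      -- optimal cost of the instance (a, t, w) is at most t - w
      have hopt : optCost (prof x j k t w) ≤ t - w := by
        refine le_trans (NSoptCost_le _ (a, (w+t)/2)) ?_
        rw [hsc, hYi, prof_apply_j, prof_apply_k x hjk]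
        have e1 : fcost a (a, (w+t)/2) ≤ 0 := by
          refine le_trans (min_le_left _ _) ?_
          simp
        have e2 : fcost t (a, (w+t)/2) ≤ (t-w)/2 := by
          refine le_trans (min_le_right _ _) ?_
          rw [show |t - ((a, (w+t)/2) : ℝ × ℝ).2| = |t - (w+t)/2| from rfl,
            abs_of_nonneg (by linarith)]
          linarith
        have e3 : fcost w (a, (w+t)/2) ≤ (t-w)/2 := by
          refine le_trans (min_le_right _ _) ?_
          rw [show |w - ((a, (w+t)/2) : ℝ × ℝ).2| = |w - (w+t)/2| from rfl,
            abs_of_nonpos (by linarith)]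
          linarith
        linarith
      have hscy : scost (prof x j k t w) (F (prof x j k t w)) ≤ ρ*(t-w) :=
        le_trans (happ _) (by nlinarith [mul_le_mul_of_nonneg_left hopt hρ0.le])
      -- agent i's facility is near a
      have hia : |a - (F (prof x j k t w)).1| ≤ ρ*(t-w) := by
        have h1 : fcost a (F (prof x j k t w)) ≤ ρ*(t-w) := by
          rw [hsc, hYi, prof_apply_j, prof_apply_k x hjk] at hscy
          have n2 := NSfcost_nonneg t (F (prof x j k t w))
          have n3 := NSfcost_nonneg w (F (prof x j k t w))
          linarith
        have h3 : ρ*(t-w) < t - a := by linarith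
        have h5 : |a - (F (prof x j k t w)).2| = t - a := by
          rw [hf2y, abs_of_nonpos (by linarith)]; ring
        rcases min_le_iff.mp h1 with h | h
        · exact h
        · rw [h5] at h; linarith
      -- agent k's cost in (a, t, w) is at least t - w
      have hk1 : t - w ≤ fcost w (F (prof x j k t w)) := by
        refine le_min ?_ ?_
        · have hF1 : (F (prof x j k t w)).1 ≤ a + ρ*(t-w) := by
            have := (abs_le.mp hia).1
            linarith
          calc t - w ≤ w - (F (prof x j k t w)).1 := by linarith
          _ ≤ |w - (F (prof x j k t w)).1| := le_abs_self _
        · rw [hf2y]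
          calc t - w = -(w - t) := by ring
          _ ≤ |w - t| := neg_le_abs _
      have hk2 := hSPk t w (x k)
      have hk3 : fcost w (F (prof x j k t (x k))) ≤ |w - f| := NSfcost_le hfac
      have hwf : |w - f| < t - w := by
        rw [abs_lt]; constructor <;> linarith
      linarith
    · -- t < f : right exclusion, uses only orderedness
      have hf1' : (f - t)*(ρ+2) < 2*(t-a) := by
        have h1 : f - t ≤ |t - f| := by
          rw [abs_sub_comm]; exact le_abs_self _
        nlinarith
      have hd1 : (f - t)/2 < (t-a)/(ρ+2) := by
        rw [div_lt_div_iff₀ two_pos h2ρ]; nlinarith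
      have hd2 : (t-a)/(ρ+2) ≤ (t-a)/ρ := by
        rw [div_le_div_iff₀ h2ρ hρ0]; nlinarith
      have hmid : (t+f)/2 < t + (t-a)/ρ := by linarith
      obtain ⟨w, hwl, hwr⟩ := exists_between hmid
      have htw : t < w := by linarith
      have hws : ρ*(w - t) < t - a := by
        have h1 : w - t < (t-a)/ρ := by linarith
        have := (lt_div_iff₀ hρ0).mp h1
        nlinarith
      have hf2y : (F (prof x j k t w)).2 = t := by
        apply hWS t w
        · rw [min_eq_left htw.le]; exact hat
        · rw [min_eq_left htw.le, max_eq_right htw.le]; exact hws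
        · exact hpt
      have hk1 : w - t ≤ fcost w (F (prof x j k t w)) := by
        refine le_min ?_ ?_
        · have hF1 : (F (prof x j k t w)).1 ≤ t :=
            le_trans (hord (prof x j k t w)) (le_of_eq hf2y)
          calc w - t ≤ w - (F (prof x j k t w)).1 := by linarith
          _ ≤ |w - (F (prof x j k t w)).1| := le_abs_self _
        · rw [hf2y]; exact le_abs_self _
      have hk2 := hSPk t w (x k)
      have hk3 : fcost w (F (prof x j k t (x k))) ≤ |w - f| := NSfcost_le hfac
      have hwf : |w - f| < w - t := by
        rw [abs_lt]; constructor <;> linarith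
      linarith
  -- STAR: if there is no facility at `t` (for `t ≥ p`, `t > a`), then every
  -- image point is at distance ≥ 2(t-a)/(ρ+2) from t.
  have hSTAR : ∀ t : ℝ, a < t → p ≤ t →
      ¬ ((F (prof x j k t (x k))).1 = t ∨ (F (prof x j k t (x k))).2 = t) →
      ∀ q : ℝ, ((F (prof x j k q (x k))).1 = q ∨ (F (prof x j k q (x k))).2 = q) →
      2*(t - a)/(ρ+2) ≤ |t - q| := by
    intro t hat hpt hnot q hq
    have h1 : 2*(t - a)/(ρ+2) ≤ fcost t (F (prof x j k t (x k))) := by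
      refine le_min ?_ ?_
      · exact hEXCL t _ hat hpt (Or.inl rfl) (fun h => hnot (Or.inl h))
      · exact hEXCL t _ hat hpt (Or.inr rfl) (fun h => hnot (Or.inr h))
    exact le_trans h1 (le_trans (hSPj t q) (NSfcost_le hq))
  -- IMG: facilities are image points
  have hIMG : ∀ t f : ℝ,
      ((F (prof x j k t (x k))).1 = f ∨ (F (prof x j k t (x k))).2 = f) →
      ((F (prof x j k f (x k))).1 = f ∨ (F (prof x j k f (x k))).2 = f) := by
    intro t f hfac
    have h2 : fcost f (F (prof x j k t (x k))) ≤ 0 := by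
      have := NSfcost_le (t := f) hfac
      simpa using this
    have h3 : fcost f (F (prof x j k f (x k))) ≤ 0 := le_trans (hSPj f t) h2
    rcases min_le_iff.mp h3 with h | h
    · left
      have h4 : |f - (F (prof x j k f (x k))).1| = 0 := le_antisymm h (abs_nonneg _)
      have h5 := abs_eq_zero.mp h4
      linarith [sub_eq_zero.mp h5]
    · right
      have h4 : |f - (F (prof x j k f (x k))).2| = 0 := le_antisymm h (abs_nonneg _)
      have h5 := abs_eq_zero.mp h4
      linarith [sub_eq_zero.mp h5]
  -- U: there is an image point strictly to the right of x j
  have hU : ∃ u : ℝ, x j < u ∧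
      ((F (prof x j k u (x k))).1 = u ∨ (F (prof x j k u (x k))).2 = u) := by
    obtain ⟨t, hteq⟩ : ∃ t : ℝ, t = x j + ρ*(x k - a) + 1 := ⟨_, rfl⟩
    have htj : x j < t := by
      have : 0 < ρ*(x k - a) := mul_pos hρ0 (by linarith)
      rw [hteq]; linarith
    have hopt : optCost (prof x j k t (x k)) ≤ x k - a := by
      refine le_trans (NSoptCost_le _ ((a + x k)/2, t)) ?_
      rw [hsc, hYi, prof_apply_j, prof_apply_k x hjk]
      have e1 : fcost a ((a + x k)/2, t) ≤ (x k - a)/2 := by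
        refine le_trans (min_le_left _ _) ?_
        rw [show |a - (((a + x k)/2, t) : ℝ × ℝ).1| = |a - (a + x k)/2| from rfl,
          abs_of_nonpos (by linarith)]
        linarith
      have e2 : fcost t ((a + x k)/2, t) ≤ 0 := by
        refine le_trans (min_le_right _ _) ?_
        simp
      have e3 : fcost (x k) ((a + x k)/2, t) ≤ (x k - a)/2 := by
        refine le_trans (min_le_left _ _) ?_
        rw [show |x k - (((a + x k)/2, t) : ℝ × ℝ).1| = |x k - (a + x k)/2| from rfl,
          abs_of_nonneg (by linarith)]
        linarith
      linarith
    have h2 : scost (prof x j k t (x k)) (F (prof x j k t (x k))) ≤ ρ*(x k - a) :=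
      le_trans (happ _) (mul_le_mul_of_nonneg_left hopt hρ0.le)
    have h3 : fcost t (F (prof x j k t (x k))) ≤ ρ*(x k - a) := by
      rw [hsc, hYi, prof_apply_j, prof_apply_k x hjk] at h2
      have n1 := NSfcost_nonneg a (F (prof x j k t (x k)))
      have n3 := NSfcost_nonneg (x k) (F (prof x j k t (x k)))
      linarith
    rcases min_le_iff.mp h3 with h | h
    · refine ⟨(F (prof x j k t (x k))).1, ?_, hIMG t _ (Or.inl rfl)⟩
      have h5 := le_abs_self (t - (F (prof x j k t (x k))).1)
      linarith
    · refine ⟨(F (prof x j k t (x k))).2, ?_, hIMG t _ (Or.inr rfl)⟩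
      have h5 := le_abs_self (t - (F (prof x j k t (x k))).2)
      linarith
  -- Final assembly
  suffices hgoal : (F (prof x j k (x j) (x k))).1 = x j ∨ (F (prof x j k (x j) (x k))).2 = x j by
    rwa [prof_self] at hgoal
  by_contra hnb
  obtain ⟨B, hBdef⟩ : ∃ B : ℝ, B = 2*(x j - a)/(ρ+2) := ⟨_, rfl⟩
  have hB : 0 < B := by
    rw [hBdef]; exact div_pos (by linarith) h2ρ
  obtain ⟨u, hu1, hu2⟩ := hU
  have hSne : Set.Nonempty {q : ℝ | x j ≤ q ∧
      ((F (prof x j k q (x k))).1 = q ∨ (F (prof x j k q (x k))).2 = q)} :=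
    ⟨u, hu1.le, hu2⟩
  have hSbdd : BddBelow {q : ℝ | x j ≤ q ∧
      ((F (prof x j k q (x k))).1 = q ∨ (F (prof x j k q (x k))).2 = q)} :=
    ⟨x j, fun q hq => hq.1⟩
  obtain ⟨r, hrdef⟩ : ∃ r : ℝ, r = sInf {q : ℝ | x j ≤ q ∧
      ((F (prof x j k q (x k))).1 = q ∨ (F (prof x j k q (x k))).2 = q)} := ⟨_, rfl⟩
  have hstar_b := hSTAR (x j) hab hjp hnb
  have hrb : x j + B ≤ r := by
    rw [hrdef]
    apply le_csInf hSne
    intro q hq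
    have h1 := hstar_b q hq.2
    have habs : |x j - q| = q - x j := by
      rw [abs_sub_comm]; exact abs_of_nonneg (by linarith [hq.1])
    rw [habs, ← hBdef] at h1
    linarith
  have hht : x j + B/2 ≤ r - B/2 := by linarith
  have hat : a < r - B/2 := by linarith
  have hpt : p ≤ r - B/2 := by linarith
  have hnt : ¬ ((F (prof x j k (r - B/2) (x k))).1 = r - B/2 ∨
      (F (prof x j k (r - B/2) (x k))).2 = r - B/2) := by
    intro hmem
    have htS : r - B/2 ∈ {q : ℝ | x j ≤ q ∧
        ((F (prof x j k q (x k))).1 = q ∨ (F (prof x j k q (x k))).2 = q)} :=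
      ⟨by linarith, hmem⟩
    have := csInf_le hSbdd htS
    rw [← hrdef] at this
    linarith
  have hstar_t := hSTAR (r - B/2) hat hpt hnt
  have hrlt : sInf {q : ℝ | x j ≤ q ∧
      ((F (prof x j k q (x k))).1 = q ∨ (F (prof x j k q (x k))).2 = q)} < r + B/2 := by
    rw [← hrdef]; linarith
  obtain ⟨q, hqS, hqlt⟩ := exists_lt_of_csInf_lt hSne hrlt
  have hqr : r ≤ q := by
    have := csInf_le hSbdd hqS
    rw [← hrdef] at this
    exact this
  have h1 := hstar_t q hqS.2
  have habs : |r - B/2 - q| = q - (r - B/2) := by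
    rw [abs_sub_comm]; exact abs_of_nonneg (by linarith)
  rw [habs] at h1
  have hmono : B < 2*(r - B/2 - a)/(ρ+2) := by
    rw [hBdef, div_lt_div_iff₀ h2ρ h2ρ]
    nlinarith [mul_pos (show (0:ℝ) < r - B/2 - x j + B/2 from by linarith) h2ρ,
      mul_pos (show (0:ℝ) < r - B/2 - x j from by linarith) h2ρ]
  linarith

end
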